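/- Let X be a poset. If X is well-founded (has no infinite strictly decreasing sequence) and X is not noetherian (i.e., there exists a sequence x_1, x_2, … with x_i ≰ x_j for all i < j), then there exists a minimal bad sequence: a bad sequence x_1, x_2, … such that for every n there is no bad sequence x_1, …, x_{n-1}, y_n, y_{n+1}, … with y_n < x_n. -/

import Mathlib

/-- A sequence in a poset is *bad* if `x i ≤ x j` fails whenever `i < j`. -/
def IsBadSeq {X : Type*} [PartialOrder X] (x : ℕ → X) : Prop :=
  ∀ i j : ℕ, i < j → ¬ x i ≤ x j

/-- Given a bad sequence `f`, construct a bad sequence agreeing with `f` before `n`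
that is minimal at `n`. -/
noncomputable def minBadOfBad {X : Type*} [PartialOrder X]
    (hwf : WellFounded ((· < ·) : X → X → Prop)) (n : ℕ) (f : ℕ → X) (hf : IsBadSeq f) :
    { g : ℕ → X // (∀ m : ℕ, m < n → f m = g m) ∧ IsBadSeq g ∧
      ∀ g' : ℕ → X, (∀ m < n, g' m = g m) → g' n < g n → ¬ IsBadSeq g' } := by
  classical
  set S : Set X := {a | ∃ g : ℕ → X, (∀ m < n, f m = g m) ∧ IsBadSeq g ∧ g n = a} with hS
  have hne : S.Nonempty := ⟨f n, f, fun _ _ => rfl, hf, rfl⟩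
  have hmem := hwf.min_mem S hne
  set g := Classical.choose hmem with hg
  obtain ⟨hg1, hg2, hg3⟩ := Classical.choose_spec hmem
  refine ⟨g, hg1, hg2, fun g' hg'1 hg'2 hbad => ?_⟩
  have : g' n ∈ S := ⟨g', fun m hm => (hg1 m hm).trans (hg'1 m hm).symm, hbad, rfl⟩
  exact hwf.not_lt_min S this (hg3 ▸ hg'2)

/-- **Existence of minimal bad sequences.** If a poset is well-founded but not noetherian
(i.e. it admits a bad sequence), then it admits a minimal bad sequence: a bad sequence
`x` such that for every `n` there is no bad sequence agreeing with `x` before `n` whose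
`n`-th term is strictly smaller than `x n`. -/
theorem stmt_2 {X : Type*} [PartialOrder X]
    (hwf : WellFounded ((· < ·) : X → X → Prop))
    (hbad : ∃ x : ℕ → X, IsBadSeq x) :
    ∃ x : ℕ → X, IsBadSeq x ∧
      ∀ (n : ℕ) (y : ℕ → X), (∀ i < n, y i = x i) → y n < x n → ¬ IsBadSeq y := by
  obtain ⟨f0, hf0⟩ := hbad
  let fs : ∀ n : ℕ, { f : ℕ → X // IsBadSeq f ∧
      ∀ g' : ℕ → X, (∀ m < n, g' m = f m) → g' n < f n → ¬ IsBadSeq g' } := by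
    refine Nat.rec ?_ fun n fn => ?_
    · exact ⟨(minBadOfBad hwf 0 f0 hf0).1, (minBadOfBad hwf 0 f0 hf0).2.2⟩
    · exact ⟨(minBadOfBad hwf (n + 1) fn.1 fn.2.1).1,
        (minBadOfBad hwf (n + 1) fn.1 fn.2.1).2.2⟩
  have h : ∀ m n, m ≤ n → (fs m).1 m = (fs n).1 m := fun m n mn => by
    obtain ⟨k, rfl⟩ := Nat.exists_eq_add_of_le mn; clear mn
    induction k with
    | zero => rfl
    | succ k ih =>
      rw [ih, (minBadOfBad hwf (m + k + 1) (fs (m + k)).1 (fs (m + k)).2.1).2.1 m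
        (Nat.lt_succ_iff.2 (Nat.add_le_add_left k.zero_le m))]
      rfl
  refine ⟨fun n => (fs n).1 n, fun m n mn => ?_, fun n g hg1 hg2 => ?_⟩
  · dsimp
    rw [h m n mn.le]
    exact (fs n).2.1 m n mn
  · refine (fs n).2.2 g (fun m mn => ?_) hg2
    rw [← h m n mn.le]
    exact hg1 m mn
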